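/- There is an absolute constant c > 0 with the following property. Let W be a finite subset of the interval [0,1] with |W| > 10, let f : W → ℝ≥0, and let C₁, C₂ ≥ 0 be constants such that for every subset Z ⊆ W one has Σ_{θ∈Z} f(θ) ≤ C₁·|Z|^{1/2} + C₂. Then Σ_{θ∈W} f(θ)² ≤ c·(C₁²·log|W| + C₂·max_{θ∈W} f(θ)). -/
import Mathlib

private lemma harmonic_le_one_add_log' (n : ℕ) (hn : 1 ≤ n) :
    ∑ j ∈ Finset.range n, (1 : ℝ) / (j + 1) ≤ 1 + Real.log n := by
  induction n with
  | zero => omega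
  | succ m ih =>
    rcases Nat.lt_or_ge m 1 with h | h
    · interval_cases m
      simp
    · have hm0 : (0 : ℝ) < m := by exact_mod_cast h
      have hstep : (1 : ℝ) / (m + 1) ≤ Real.log (m + 1) - Real.log m := by
        have hx : (0 : ℝ) < (m : ℝ) / (m + 1) := by positivity
        have := Real.log_le_sub_one_of_pos hx
        rw [Real.log_div (by positivity) (by positivity)] at this
        have hm1 : (0 : ℝ) < (m : ℝ) + 1 := by positivity
        rw [div_sub_one (by positivity)] at this
        have : Real.log ↑m - Real.log (↑m + 1) ≤ -(1 / (↑m + 1)) := by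
          calc Real.log ↑m - Real.log (↑m + 1) ≤ (↑m - (↑m + 1)) / (↑m + 1) := this
            _ = -(1 / (↑m + 1)) := by ring
        linarith
      have := ih h
      rw [Finset.sum_range_succ]
      push_cast
      linarith

/-- If `f : W → ℝ≥0` on a finite set `W ⊆ [0,1]` with `|W| > 10` satisfies
`Σ_{θ∈Z} f(θ) ≤ C₁|Z|^{1/2} + C₂` for every `Z ⊆ W`, then
`Σ_{θ∈W} f(θ)² ≪ C₁² log|W| + C₂ max_{θ∈W} f(θ)`, with an absolute implied constant. -/
theorem sum_sq_le_of_subset_sum_bound :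
    ∃ c : ℝ, 0 < c ∧
      ∀ (W : Finset ℝ), (↑W : Set ℝ) ⊆ Set.Icc (0 : ℝ) 1 → 10 < W.card →
        ∀ hW : W.Nonempty,
          ∀ f : ℝ → ℝ, (∀ θ ∈ W, 0 ≤ f θ) →
            ∀ C₁ C₂ : ℝ, 0 ≤ C₁ → 0 ≤ C₂ →
              (∀ Z ⊆ W, ∑ θ ∈ Z, f θ ≤ C₁ * Real.sqrt (Z.card : ℝ) + C₂) →
              ∑ θ ∈ W, f θ ^ 2 ≤
                c * (C₁ ^ 2 * Real.log (W.card : ℝ) + C₂ * W.sup' hW f) := by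
  refine ⟨8, by norm_num, ?_⟩
  intro W _ hcard hW f hf C₁ C₂ hC₁ hC₂ hsub
  set n := W.card with hn
  set M := W.sup' hW f with hM
  have hn0 : 0 < n := by omega
  obtain ⟨θ₀, hθ₀⟩ := hW
  have hM0 : 0 ≤ M := le_trans (hf θ₀ hθ₀) (Finset.le_sup' f hθ₀)
  -- sorted enumeration
  set g : Fin n → ℝ := fun i => f (W.equivFin.symm i) with hg
  set ι : Fin n ≃ {x // x ∈ W} :=
    (Fin.revPerm.trans (Tuple.sort g)).trans W.equivFin.symm with hι
  set a : Fin n → ℝ := fun i => f (ι i) with ha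
  have hιW : ∀ i, ((ι i : {x // x ∈ W}) : ℝ) ∈ W := fun i => (ι i).2
  have ha0 : ∀ i, 0 ≤ a i := fun i => hf _ (hιW i)
  have haM : ∀ i, a i ≤ M := fun i => Finset.le_sup' f (hιW i)
  have hanti : ∀ i j : Fin n, i ≤ j → a j ≤ a i := by
    intro i j hij
    have hrev : j.rev ≤ i.rev := Fin.rev_le_rev.2 hij
    have := Tuple.monotone_sort g hrev
    simpa [ha, hι, hg, Function.comp] using this
  -- key subset bound on index sets
  have hkey : ∀ s : Finset (Fin n), ∑ i ∈ s, a i ≤ C₁ * Real.sqrt s.card + C₂ := by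
    intro s
    have hinj : Function.Injective (fun i : Fin n => ((ι i : {x // x ∈ W}) : ℝ)) := by
      intro i j h
      exact ι.injective (Subtype.ext h)
    have hZ : s.image (fun i => ((ι i : {x // x ∈ W}) : ℝ)) ⊆ W := by
      intro x hx
      obtain ⟨i, _, rfl⟩ := Finset.mem_image.1 hx
      exact hιW i
    have h := hsub _ hZ
    rwa [Finset.sum_image (fun i _ j _ h => hinj h),
      Finset.card_image_of_injective _ hinj] at h
  -- pointwise bound
  have hbd : ∀ k : Fin n, ((k : ℕ) + 1 : ℝ) * a k ≤ C₁ * Real.sqrt ((k : ℕ) + 1) + C₂ := by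
    intro k
    have h1 : ((k : ℕ) + 1 : ℝ) * a k = ∑ _i ∈ Finset.Iic k, a k := by
      rw [Finset.sum_const, Fin.card_Iic]
      push_cast
      ring
    have h2 : ∑ _i ∈ Finset.Iic k, a k ≤ ∑ i ∈ Finset.Iic k, a i :=
      Finset.sum_le_sum fun i hi => hanti i k (Finset.mem_Iic.1 hi)
    have h3 := hkey (Finset.Iic k)
    rw [Fin.card_Iic] at h3
    push_cast at h3
    linarith
  -- split
  classical
  set S : Finset (Fin n) :=
    Finset.univ.filter (fun k : Fin n => C₁ * Real.sqrt ((k : ℕ) + 1) ≤ C₂) with hS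
  have hSsum : ∑ i ∈ S, a i ≤ 2 * C₂ := by
    rcases S.eq_empty_or_nonempty with h | h
    · rw [h, Finset.sum_empty]; positivity
    · set k := S.max' h with hk
      have hkS : k ∈ S := S.max'_mem h
      have hkC : C₁ * Real.sqrt ((k : ℕ) + 1) ≤ C₂ := (Finset.mem_filter.1 hkS).2
      have hsub' : S ⊆ Finset.Iic k := fun i hi => Finset.mem_Iic.2 (S.le_max' i hi)
      have hcard' : (S.card : ℝ) ≤ (k : ℕ) + 1 := by
        have := Finset.card_le_card hsub'
        rw [Fin.card_Iic] at this
        exact_mod_cast this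
      have hsq : C₁ * Real.sqrt S.card ≤ C₂ := by
        refine le_trans ?_ hkC
        have : Real.sqrt (S.card : ℝ) ≤ Real.sqrt ((k : ℕ) + 1) :=
          Real.sqrt_le_sqrt hcard'
        nlinarith [Real.sqrt_nonneg (S.card : ℝ)]
      have := hkey S
      linarith
  have hSpart : ∑ i ∈ S, a i ^ 2 ≤ 2 * C₂ * M := by
    calc ∑ i ∈ S, a i ^ 2 ≤ ∑ i ∈ S, M * a i := by
          refine Finset.sum_le_sum fun i _ => ?_
          have h1 := haM i
          have h2 := ha0 i
          nlinarith
      _ = M * ∑ i ∈ S, a i := by rw [Finset.mul_sum]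
      _ ≤ M * (2 * C₂) := mul_le_mul_of_nonneg_left hSsum hM0
      _ = 2 * C₂ * M := by ring
  -- complement part
  have hCpart : ∑ i ∈ Finset.univ.filter (fun k : Fin n =>
      ¬ C₁ * Real.sqrt ((k : ℕ) + 1) ≤ C₂), a i ^ 2 ≤
      ∑ i : Fin n, 4 * C₁ ^ 2 / ((i : ℕ) + 1) := by
    refine le_trans (Finset.sum_le_sum ?_)
      (Finset.sum_le_sum_of_subset_of_nonneg (Finset.filter_subset _ _)
        (fun i _ _ => by positivity))
    intro k hk
    have hkC : C₂ < C₁ * Real.sqrt ((k : ℕ) + 1) :=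
      lt_of_not_ge (Finset.mem_filter.1 hk).2
    set t : ℝ := (k : ℕ) + 1 with ht
    have ht0 : (0 : ℝ) < t := by positivity
    set s : ℝ := Real.sqrt t with hs
    have hs0 : 0 < s := Real.sqrt_pos.2 ht0
    have hs2 : s ^ 2 = t := Real.sq_sqrt ht0.le
    have hle : t * a k ≤ 2 * C₁ * s := by
      have := hbd k
      rw [← ht, ← hs] at *
      linarith
    have hta : 0 ≤ t * a k := mul_nonneg ht0.le (ha0 k)
    have hsq : (t * a k) ^ 2 ≤ (2 * C₁ * s) ^ 2 := pow_le_pow_left₀ hta hle 2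
    rw [le_div_iff₀ ht0]
    nlinarith [hsq, hs2, ht0]
  -- harmonic bound
  have hlog1 : 1 ≤ Real.log n := by
    rw [Real.le_log_iff_exp_le (by exact_mod_cast hn0 : (0:ℝ) < (n:ℝ))]
    have h11 : (11 : ℝ) ≤ (n : ℝ) := by exact_mod_cast hcard
    have := Real.exp_one_lt_d9
    linarith
  have hharm : ∑ i : Fin n, 4 * C₁ ^ 2 / ((i : ℕ) + 1) ≤ 8 * C₁ ^ 2 * Real.log n := by
    have heq : ∑ i : Fin n, 4 * C₁ ^ 2 / ((i : ℕ) + 1)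
        = 4 * C₁ ^ 2 * ∑ j ∈ Finset.range n, (1 : ℝ) / (j + 1) := by
      rw [Fin.sum_univ_eq_sum_range (fun j => 4 * C₁ ^ 2 / ((j : ℝ) + 1)) n,
        Finset.mul_sum]
      refine Finset.sum_congr rfl fun j _ => ?_
      ring
    rw [heq]
    have h1 := harmonic_le_one_add_log' n hn0
    nlinarith [sq_nonneg C₁]
  -- put together
  have hsum_eq : ∑ θ ∈ W, f θ ^ 2 = ∑ i : Fin n, a i ^ 2 := by
    rw [← Finset.sum_coe_sort W (fun θ => f θ ^ 2),
      ← Equiv.sum_comp ι (fun x : {x // x ∈ W} => f x ^ 2)]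
  have hsplit := Finset.sum_filter_add_sum_filter_not Finset.univ
    (fun k : Fin n => C₁ * Real.sqrt ((k : ℕ) + 1) ≤ C₂) (fun i => a i ^ 2)
  have hC₂M : 0 ≤ C₂ * M := mul_nonneg hC₂ hM0
  rw [hsum_eq, ← hsplit]
  have := le_trans hCpart hharm
  nlinarith
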